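/- In the Koch network K_g, let x be a node with label {0, i_1, …, i_n} (n ≥ 1) and let p be its parent, the node with label {0, i_1, …, i_{n−1}}. Then the sums of shortest-path distances satisfy the recursion d_x(g) = d_p(g) + 2·4^g − 2·4^{g−i_n}. -/

import Mathlib

open Matrix BigOperators

/-- The triangles of the Koch network `K_g`: the initial triangle, plus, at each
iteration, one new triangle for each corner node of each existing triangle. -/
def KochT : ℕ → Type
  | 0 => Unit
  | g + 1 => KochT g ⊕ (KochT g × Fin 3)

/-- The vertices of the Koch network `K_g`: at each iteration, each corner node of
each existing triangle spawns two new vertices. -/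
def KochV : ℕ → Type
  | 0 => Fin 3
  | g + 1 => KochV g ⊕ (KochT g × Fin 3 × Fin 2)

instance kochTFintype : ∀ g, Fintype (KochT g)
  | 0 => inferInstanceAs (Fintype Unit)
  | g + 1 =>
    letI := kochTFintype g
    inferInstanceAs (Fintype (KochT g ⊕ (KochT g × Fin 3)))

instance kochVFintype : ∀ g, Fintype (KochV g)
  | 0 => inferInstanceAs (Fintype (Fin 3))
  | g + 1 =>
    letI := kochVFintype g
    letI := kochTFintype g
    inferInstanceAs (Fintype (KochV g ⊕ (KochT g × Fin 3 × Fin 2)))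

instance kochTDecEq : ∀ g, DecidableEq (KochT g)
  | 0 => inferInstanceAs (DecidableEq Unit)
  | g + 1 =>
    letI := kochTDecEq g
    inferInstanceAs (DecidableEq (KochT g ⊕ (KochT g × Fin 3)))

instance kochVDecEq : ∀ g, DecidableEq (KochV g)
  | 0 => inferInstanceAs (DecidableEq (Fin 3))
  | g + 1 =>
    letI := kochVDecEq g
    letI := kochTDecEq g
    inferInstanceAs (DecidableEq (KochV g ⊕ (KochT g × Fin 3 × Fin 2)))

/-- The three corners of a triangle of `K_g`.  For a triangle created at some
iteration and attached to corner `i` of triangle `t`, corner `0` is the mother node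
(corner `i` of `t`) and corners `1`, `2` are the two newly created nodes. -/
def kochCorner : ∀ g, KochT g → Fin 3 → KochV g
  | 0, _, c => c
  | g + 1, Sum.inl t, c => Sum.inl (kochCorner g t c)
  | g + 1, Sum.inr (t, i), c =>
    if c = 0 then Sum.inl (kochCorner g t i)
    else if c = 1 then Sum.inr (t, i, 0) else Sum.inr (t, i, 1)

/-- The Koch network `K_g` as a simple graph: two vertices are adjacent iff they
are distinct corners of a common triangle. -/
def kochGraph (g : ℕ) : SimpleGraph (KochV g) :=
  SimpleGraph.fromRel (fun x y => ∃ (t : KochT g) (c c' : Fin 3),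
    c ≠ c' ∧ x = kochCorner g t c ∧ y = kochCorner g t c')

/-- The level of a node of `K_g`: the iteration at which it was created.  The three
initial nodes (the hubs) are at level `0`. -/
def kochLevel : ∀ g, KochV g → ℕ
  | 0, _ => 0
  | g + 1, Sum.inl x => kochLevel g x
  | g + 1, Sum.inr _ => g + 1

/-- The parent (mother node) of a node of `K_g`; the hubs have no parent. -/
def kochParent : ∀ g, KochV g → Option (KochV g)
  | 0, _ => none
  | g + 1, Sum.inl x => (kochParent g x).map Sum.inl
  | g + 1, Sum.inr (t, i, _) => some (Sum.inl (kochCorner g t i))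

/-- The label `{0, i_1, …, i_n}` of a node of `K_g`: the increasing list of levels of
the nodes on the unique shortest path from the nearest hub to the node.  A hub has
label `[0]`; a node created at iteration `g+1` appends `g+1` to its mother's label. -/
def kochLabel : ∀ g, KochV g → List ℕ
  | 0, _ => [0]
  | g + 1, Sum.inl x => kochLabel g x
  | g + 1, Sum.inr (t, i, _) => kochLabel g (kochCorner g t i) ++ [g + 1]

/-- The all-ones matrix `J`. -/
def JMat (V : Type*) : Matrix V V ℝ := Matrix.of fun _ _ => (1 : ℝ)

/-- The Laplacian matrix (over `ℝ`) of a simple graph (all edge weights `1`). -/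
noncomputable def glap {V : Type*} [Fintype V] (G : SimpleGraph V) : Matrix V V ℝ := by
  classical exact SimpleGraph.lapMatrix ℝ G

/-- The pseudoinverse `L† = (L + (1/N)·J)⁻¹ - (1/N)·J` of the graph Laplacian. -/
noncomputable def gdag {V : Type*} [Fintype V] [DecidableEq V] (G : SimpleGraph V) : Matrix V V ℝ :=
  (glap G + ((Fintype.card V : ℝ))⁻¹ • JMat V)⁻¹ - ((Fintype.card V : ℝ))⁻¹ • JMat V

/-- The resistance distance `r_{xy} = L†_{xx} + L†_{yy} - 2 L†_{xy}`. -/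
noncomputable def gres {V : Type*} [Fintype V] [DecidableEq V] (G : SimpleGraph V) (x y : V) : ℝ :=
  gdag G x x + gdag G y y - 2 * gdag G x y
/-- Explicit distance function on the Koch network. -/
def kdist : ∀ g, KochV g → KochV g → ℕ
  | 0, x, y => if x = y then 0 else 1
  | g+1, Sum.inl u, Sum.inl v => kdist g u v
  | g+1, Sum.inl u, Sum.inr (t, i, _) => kdist g u (kochCorner g t i) + 1
  | g+1, Sum.inr (t, i, _), Sum.inl v => kdist g (kochCorner g t i) v + 1
  | g+1, Sum.inr (t, i, j), Sum.inr (t', i', j') =>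
      if t = t' ∧ i = i' then (if j = j' then 0 else 1)
      else kdist g (kochCorner g t i) (kochCorner g t' i') + 2

lemma kdist_self : ∀ g (x : KochV g), kdist g x x = 0
  | 0, x => by simp [kdist]
  | g+1, Sum.inl u => kdist_self g u
  | g+1, Sum.inr (t, i, j) => by simp [kdist]

lemma kdist_comm : ∀ g (x y : KochV g), kdist g x y = kdist g y x
  | 0, x, y => by simp [kdist, eq_comm]
  | g+1, Sum.inl u, Sum.inl v => kdist_comm g u v
  | g+1, Sum.inl u, Sum.inr (t, i, j) => by
      simp only [kdist]; rw [kdist_comm g]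
  | g+1, Sum.inr (t, i, j), Sum.inl v => by
      simp only [kdist]; rw [kdist_comm g]
  | g+1, Sum.inr (t, i, j), Sum.inr (t', i', j') => by
      simp only [kdist]
      by_cases h : t = t' ∧ i = i'
      · obtain ⟨rfl, rfl⟩ := h
        simp [eq_comm]
      · have h' : ¬(t' = t ∧ i' = i) := fun ⟨a, b⟩ => h ⟨a.symm, b.symm⟩
        rw [if_neg h, if_neg h', kdist_comm g]
lemma kdist_triangle : ∀ g (x y z : KochV g), kdist g x z ≤ kdist g x y + kdist g y z
  | 0, x, y, z => by
      by_cases hxz : x = z <;> by_cases hxy : x = y <;> by_cases hyz : y = z <;>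
        simp_all [kdist]
  | g+1, Sum.inl u, Sum.inl v, Sum.inl w => kdist_triangle g u v w
  | g+1, Sum.inl u, Sum.inl v, Sum.inr (t, i, j) => by
      simp only [kdist]
      have := kdist_triangle g u v (kochCorner g t i); omega
  | g+1, Sum.inl u, Sum.inr (t, i, j), Sum.inl w => by
      simp only [kdist]
      have := kdist_triangle g u (kochCorner g t i) w; omega
  | g+1, Sum.inl u, Sum.inr (t, i, j), Sum.inr (t', i', j') => by
      simp only [kdist]
      by_cases h : t = t' ∧ i = i'
      · obtain ⟨rfl, rfl⟩ := h
        simp only [eq_self_iff_true, and_self, if_true]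
        split <;> omega
      · rw [if_neg h]
        have := kdist_triangle g u (kochCorner g t i) (kochCorner g t' i'); omega
  | g+1, Sum.inr (t, i, j), Sum.inl v, Sum.inl w => by
      simp only [kdist]
      have := kdist_triangle g (kochCorner g t i) v w; omega
  | g+1, Sum.inr (t, i, j), Sum.inl v, Sum.inr (t', i', j') => by
      simp only [kdist]
      by_cases h : t = t' ∧ i = i'
      · obtain ⟨rfl, rfl⟩ := h
        simp only [eq_self_iff_true, and_self, if_true]
        split <;> omega
      · rw [if_neg h]
        have := kdist_triangle g (kochCorner g t i) v (kochCorner g t' i'); omega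
  | g+1, Sum.inr (t, i, j), Sum.inr (t', i', j'), Sum.inl w => by
      simp only [kdist]
      by_cases h : t = t' ∧ i = i'
      · obtain ⟨rfl, rfl⟩ := h
        simp only [eq_self_iff_true, and_self, if_true]
        split <;> omega
      · rw [if_neg h]
        have := kdist_triangle g (kochCorner g t i) (kochCorner g t' i') w; omega
  | g+1, Sum.inr (t1, i1, j1), Sum.inr (t2, i2, j2), Sum.inr (t3, i3, j3) => by
      simp only [kdist]
      by_cases h13 : t1 = t3 ∧ i1 = i3
      · obtain ⟨rfl, rfl⟩ := h13
        simp only [eq_self_iff_true, and_self, if_true]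
        by_cases h12 : t1 = t2 ∧ i1 = i2
        · obtain ⟨rfl, rfl⟩ := h12
          simp only [eq_self_iff_true, and_self, if_true]
          by_cases h1 : j1 = j3 <;> by_cases h2 : j1 = j2 <;> by_cases h3 : j2 = j3 <;>
            simp_all <;> omega
        · rw [if_neg h12]
          have h23 : ¬(t2 = t1 ∧ i2 = i1) := fun ⟨a, b⟩ => h12 ⟨a.symm, b.symm⟩
          rw [if_neg h23]
          split <;> omega
      · rw [if_neg h13]
        by_cases h12 : t1 = t2 ∧ i1 = i2
        · obtain ⟨rfl, rfl⟩ := h12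
          rw [if_pos ⟨rfl, rfl⟩, if_neg h13]
          split <;> omega
        · rw [if_neg h12]
          by_cases h23 : t2 = t3 ∧ i2 = i3
          · obtain ⟨rfl, rfl⟩ := h23
            simp only [eq_self_iff_true, and_self, if_true]
            split <;> omega
          · rw [if_neg h23]
            have := kdist_triangle g (kochCorner g t1 i1) (kochCorner g t2 i2)
              (kochCorner g t3 i3)
            omega
lemma kdist_corner_le : ∀ g (T : KochT g) (c c' : Fin 3),
    kdist g (kochCorner g T c) (kochCorner g T c') ≤ 1
  | 0, _, c, c' => by change (if c = c' then 0 else 1) ≤ 1; split <;> omega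
  | g+1, Sum.inl t, c, c' => by
      simpa only [kochCorner, kdist] using kdist_corner_le g t c c'
  | g+1, Sum.inr (t, i), c, c' => by
      fin_cases c <;> fin_cases c' <;>
        simp [kochCorner, kdist, kdist_self]

lemma kdist_adj {g : ℕ} {x y : KochV g} (h : (kochGraph g).Adj x y) : kdist g x y ≤ 1 := by
  rw [kochGraph, SimpleGraph.fromRel_adj] at h
  obtain ⟨-, ⟨T, c, c', -, rfl, rfl⟩ | ⟨T, c, c', -, rfl, rfl⟩⟩ := h
  · exact kdist_corner_le g T c c'
  · rw [kdist_comm]; exact kdist_corner_le g T c c'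

/-- The embedding of `K_g` into `K_{g+1}` as a graph homomorphism. -/
def kochHom (g : ℕ) : kochGraph g →g kochGraph (g+1) where
  toFun := Sum.inl
  map_rel' := by
    intro u v h
    rw [kochGraph, SimpleGraph.fromRel_adj] at h
    refine (SimpleGraph.fromRel_adj (V := KochV (g+1)) _ _ _).mpr ?_
    refine ⟨fun hc => h.1 (Sum.inl_injective hc), ?_⟩
    obtain ⟨-, ⟨T, c, c', hcc, rfl, rfl⟩ | ⟨T, c, c', hcc, rfl, rfl⟩⟩ := h
    · exact Or.inl ⟨Sum.inl T, c, c', hcc, rfl, rfl⟩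
    · exact Or.inr ⟨Sum.inl T, c, c', hcc, rfl, rfl⟩

lemma adj_mother (g : ℕ) (t : KochT g) (i : Fin 3) (j : Fin 2) :
    (kochGraph (g+1)).Adj (Sum.inl (kochCorner g t i)) (Sum.inr (t, i, j)) := by
  refine (SimpleGraph.fromRel_adj (V := KochV (g+1)) _ _ _).mpr ?_
  refine ⟨fun hc => by injection hc, Or.inl ?_⟩
  fin_cases j
  · exact ⟨Sum.inr (t, i), 0, 1, by decide, by simp [kochCorner]; rfl, by simp [kochCorner]; rfl⟩
  · exact ⟨Sum.inr (t, i), 0, 2, by decide, by simp [kochCorner]; rfl, by simp [kochCorner]; rfl⟩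

lemma adj_sibling (g : ℕ) (t : KochT g) (i : Fin 3) :
    (kochGraph (g+1)).Adj (Sum.inr (t, i, 0)) (Sum.inr (t, i, 1)) := by
  refine (SimpleGraph.fromRel_adj (V := KochV (g+1)) _ _ _).mpr ?_
  refine ⟨fun hc => ?_, Or.inl ⟨Sum.inr (t, i), 1, 2, by decide,
    by simp [kochCorner]; rfl, by simp [kochCorner]; rfl⟩⟩
  injection hc with h
  injection h with h1 h2
  injection h2 with h3 h4
  exact absurd h4 (by decide)

lemma exists_walk : ∀ g (x y : KochV g),
    ∃ w : (kochGraph g).Walk x y, w.length = kdist g x y := by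
  intro g
  induction g with
  | zero =>
    intro x y
    by_cases h : x = y
    · subst h; exact ⟨SimpleGraph.Walk.nil, by simp [kdist]⟩
    · have hadj : (kochGraph 0).Adj x y := by
        rw [kochGraph, SimpleGraph.fromRel_adj]
        exact ⟨h, Or.inl ⟨(), x, y, h, rfl, rfl⟩⟩
      exact ⟨hadj.toWalk, by simp [kdist, h]⟩
  | succ g IH =>
    intro x y
    match x, y with
    | Sum.inl u, Sum.inl v =>
      obtain ⟨w, hw⟩ := IH u v
      exact ⟨w.map (kochHom g), (SimpleGraph.Walk.length_map (kochHom g) w).trans hw⟩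
    | Sum.inl u, Sum.inr (t, i, j) =>
      obtain ⟨w, hw⟩ := IH u (kochCorner g t i)
      exact ⟨(w.map (kochHom g)).concat (adj_mother g t i j),
        (SimpleGraph.Walk.length_concat _ _).trans (congrArg (· + 1) ((SimpleGraph.Walk.length_map (kochHom g) w).trans hw))⟩
    | Sum.inr (t, i, j), Sum.inl v =>
      obtain ⟨w, hw⟩ := IH (kochCorner g t i) v
      exact ⟨SimpleGraph.Walk.cons (adj_mother g t i j).symm (w.map (kochHom g)),
        (SimpleGraph.Walk.length_cons _ _).trans (congrArg (· + 1) ((SimpleGraph.Walk.length_map (kochHom g) w).trans hw))⟩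
    | Sum.inr (t, i, j), Sum.inr (t', i', j') =>
      by_cases h : t = t' ∧ i = i'
      · obtain ⟨rfl, rfl⟩ := h
        by_cases hj : j = j'
        · subst hj
          exact ⟨SimpleGraph.Walk.nil, by simp [kdist]; rfl⟩
        · fin_cases j <;> fin_cases j'
          · exact absurd rfl hj
          · exact ⟨(adj_sibling g t i).toWalk, by simp [kdist]; rfl⟩
          · exact ⟨(adj_sibling g t i).symm.toWalk, by simp [kdist]; rfl⟩
          · exact absurd rfl hj
      · obtain ⟨w, hw⟩ := IH (kochCorner g t i) (kochCorner g t' i')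
        refine ⟨SimpleGraph.Walk.cons (adj_mother g t i j).symm
          ((w.map (kochHom g)).concat (adj_mother g t' i' j')), ?_⟩
        simp only [kdist, if_neg h, SimpleGraph.Walk.length_cons,
          SimpleGraph.Walk.length_concat, SimpleGraph.Walk.length_map, hw]
        exact (SimpleGraph.Walk.length_cons _ _).trans (congrArg (· + 1)
          ((SimpleGraph.Walk.length_concat _ _).trans (congrArg (· + 1) ((SimpleGraph.Walk.length_map (kochHom g) w).trans hw))))

lemma kdist_le_length {g : ℕ} {x y : KochV g} (w : (kochGraph g).Walk x y) :
    kdist g x y ≤ w.length := by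
  induction w with
  | nil => simp [kdist_self]
  | @cons a b c h w ih =>
    have h1 := kdist_adj h
    have h2 := kdist_triangle g a b c
    simp only [SimpleGraph.Walk.length_cons]
    omega

lemma dist_eq_kdist (g : ℕ) (x y : KochV g) : (kochGraph g).dist x y = kdist g x y := by
  obtain ⟨w, hw⟩ := exists_walk g x y
  refine le_antisymm (hw ▸ SimpleGraph.dist_le w) ?_
  obtain ⟨w', hw'⟩ := (SimpleGraph.Reachable.exists_walk_length_eq_dist ⟨w⟩)
  exact hw' ▸ kdist_le_length w'
lemma kochLevel_le : ∀ g (x : KochV g), kochLevel g x ≤ g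
  | 0, _ => le_refl 0
  | g+1, Sum.inl u => (kochLevel_le g u).trans (Nat.le_succ g)
  | g+1, Sum.inr _ => le_refl _

lemma card_kochT : ∀ g, Fintype.card (KochT g) = 4 ^ g
  | 0 => rfl
  | g+1 => by
      show Fintype.card (KochT g ⊕ (KochT g × Fin 3)) = 4 ^ (g+1)
      rw [Fintype.card_sum, Fintype.card_prod, card_kochT g, Fintype.card_fin]
      ring

lemma card_kochV : ∀ g, Fintype.card (KochV g) = 2 * 4 ^ g + 1
  | 0 => rfl
  | g+1 => by
      show Fintype.card (KochV g ⊕ (KochT g × Fin 3 × Fin 2)) = 2 * 4 ^ (g+1) + 1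
      rw [Fintype.card_sum, Fintype.card_prod, Fintype.card_prod, card_kochV g,
        card_kochT g, Fintype.card_fin, Fintype.card_fin]
      ring

lemma sum_kochV_succ {M : Type*} [AddCommMonoid M] (g : ℕ) (f : KochV (g+1) → M) :
    ∑ y : KochV (g+1), f y =
      (∑ y : KochV g, f (Sum.inl y)) +
        ∑ z : KochT g × Fin 3 × Fin 2, f (Sum.inr z) := by
  exact Fintype.sum_sum_type f

lemma sum_kochT_succ {M : Type*} [AddCommMonoid M] (g : ℕ) (f : KochT (g+1) → M) :
    ∑ t : KochT (g+1), f t =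
      (∑ t : KochT g, f (Sum.inl t)) + ∑ z : KochT g × Fin 3, f (Sum.inr z) := by
  exact Fintype.sum_sum_type f
lemma sum_corner : ∀ g (f : KochV g → ℕ),
    ∑ p : KochT g × Fin 3, f (kochCorner g p.1 p.2) =
      ∑ y : KochV g, 2 ^ (g - kochLevel g y) * f y
  | 0, f => by
      rw [Fintype.sum_prod_type]
      show ∑ t : Unit, ∑ i : Fin 3, f (kochCorner 0 t i) =
        ∑ y : Fin 3, 2 ^ (0 - kochLevel 0 y) * f y
      simp [kochCorner, kochLevel]
  | g+1, f => by
      rw [Fintype.sum_prod_type]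
      rw [sum_kochT_succ g (fun T => ∑ i : Fin 3, f (kochCorner (g+1) T i))]
      have h1 : ∀ t : KochT g, ∑ i : Fin 3, f (kochCorner (g+1) (Sum.inl t) i) =
          ∑ i : Fin 3, f (Sum.inl (kochCorner g t i)) := by
        intro t; rfl
      have h2 : ∀ z : KochT g × Fin 3, ∑ i : Fin 3, f (kochCorner (g+1) (Sum.inr z) i) =
          f (Sum.inl (kochCorner g z.1 z.2)) + (f (Sum.inr (z.1, z.2, 0)) +
            f (Sum.inr (z.1, z.2, 1))) := by
        rintro ⟨t, i2⟩
        rw [Fin.sum_univ_three]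
        simp [kochCorner]
        ring
      simp only [h1, h2]
      rw [Finset.sum_add_distrib]
      have hIH : ∀ h : KochV g → ℕ, ∑ z : KochT g × Fin 3, h (kochCorner g z.1 z.2) =
          ∑ y : KochV g, 2 ^ (g - kochLevel g y) * h y := sum_corner g
      rw [sum_kochV_succ g (fun y => 2 ^ (g + 1 - kochLevel (g+1) y) * f y)]
      have h3 : ∑ y : KochV g, 2 ^ (g + 1 - kochLevel (g+1) (Sum.inl y)) * f (Sum.inl y)
          = ∑ y : KochV g, 2 * (2 ^ (g - kochLevel g y) * f (Sum.inl y)) := by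
        apply Finset.sum_congr rfl
        intro y _
        have hle := kochLevel_le g y
        have hlvl : kochLevel (g+1) (Sum.inl y) = kochLevel g y := rfl
        rw [hlvl, show g + 1 - kochLevel g y = (g - kochLevel g y) + 1 by omega,
          pow_succ]
        ring
      rw [h3]
      have h4 : ∑ z : KochT g × Fin 3 × Fin 2,
          2 ^ (g + 1 - kochLevel (g+1) (Sum.inr z)) * f (Sum.inr z) =
          ∑ z : KochT g × Fin 3, (f (Sum.inr (z.1, z.2, 0)) + f (Sum.inr (z.1, z.2, 1))) := by
        simp only [Fintype.sum_prod_type]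
        apply Finset.sum_congr rfl
        intro t _
        apply Finset.sum_congr rfl
        intro i _
        rw [Fin.sum_univ_two]
        have e0 : kochLevel (g+1) (Sum.inr (t, i, (0 : Fin 2))) = g + 1 := rfl
        have e1 : kochLevel (g+1) (Sum.inr (t, i, (1 : Fin 2))) = g + 1 := rfl
        rw [e0, e1, Nat.sub_self, pow_zero, one_mul, one_mul]
      rw [h4]
      rw [← Fintype.sum_prod_type' (f := fun t i => f (Sum.inl (kochCorner g t i)))]
      rw [hIH (fun y => f (Sum.inl y))]
      rw [Finset.sum_add_distrib]
      have h5 : ∀ y : KochV g, 2 * (2 ^ (g - kochLevel g y) * f (Sum.inl y)) =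
          2 ^ (g - kochLevel g y) * f (Sum.inl y) + 2 ^ (g - kochLevel g y) * f (Sum.inl y) := by
        intro y; ring
      simp only [h5]
      rw [Finset.sum_add_distrib]
      omega
lemma kdist_inl_inl (g : ℕ) (u v : KochV g) :
    kdist (g+1) (Sum.inl u) (Sum.inl v) = kdist g u v := rfl

lemma kdist_inl_inr (g : ℕ) (u : KochV g) (t : KochT g) (i : Fin 3) (j : Fin 2) :
    kdist (g+1) (Sum.inl u) (Sum.inr (t, i, j)) = kdist g u (kochCorner g t i) + 1 := rfl

lemma kdist_inr_inl (g : ℕ) (u : KochV g) (t : KochT g) (i : Fin 3) (j : Fin 2) :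
    kdist (g+1) (Sum.inr (t, i, j)) (Sum.inl u) = kdist g (kochCorner g t i) u + 1 := rfl

lemma level_inl (g : ℕ) (u : KochV g) : kochLevel (g+1) (Sum.inl u) = kochLevel g u := rfl

lemma level_inr (g : ℕ) (z : KochT g × Fin 3 × Fin 2) :
    kochLevel (g+1) (Sum.inr z) = g + 1 := rfl

/-- sum of distances from `x`. -/
def dsum (g : ℕ) (x : KochV g) : ℕ := ∑ y : KochV g, kdist g x y

/-- weighted sum of distances from `x`. -/
def wsum (g : ℕ) (x : KochV g) : ℕ :=
  ∑ y : KochV g, 2 ^ (g - kochLevel g y) * kdist g x y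

lemma weight_total (g : ℕ) : ∑ y : KochV g, 2 ^ (g - kochLevel g y) = 3 * 4 ^ g := by
  have h := sum_corner g (fun _ => 1)
  simp only [mul_one] at h
  rw [← h, Finset.sum_const, Finset.card_univ, Fintype.card_prod, card_kochT,
    Fintype.card_fin, smul_eq_mul, mul_one]
  ring

lemma sum_pair_of_triple (g : ℕ) (F : KochT g × Fin 3 → ℕ) :
    ∑ z : KochT g × Fin 3 × Fin 2, F (z.1, z.2.1) =
      2 * ∑ p : KochT g × Fin 3, F p := by
  simp only [Fintype.sum_prod_type]
  rw [Finset.mul_sum]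
  apply Finset.sum_congr rfl
  intro t _
  rw [Finset.mul_sum]
  apply Finset.sum_congr rfl
  intro i _
  rw [Fin.sum_univ_two]
  ring

lemma sum_corner_kdist (g : ℕ) (u : KochV g) :
    ∑ p : KochT g × Fin 3, kdist g u (kochCorner g p.1 p.2) = wsum g u :=
  sum_corner g (fun y => kdist g u y)

lemma card_pair (g : ℕ) : ∑ _p : KochT g × Fin 3, (1 : ℕ) = 3 * 4 ^ g := by
  rw [Finset.sum_const, Finset.card_univ, Fintype.card_prod, card_kochT,
    Fintype.card_fin, smul_eq_mul, mul_one]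
  ring

lemma dsum_inl (g : ℕ) (u : KochV g) :
    dsum (g+1) (Sum.inl u) = dsum g u + 2 * wsum g u + 6 * 4 ^ g := by
  unfold dsum
  rw [sum_kochV_succ g (fun y => kdist (g+1) (Sum.inl u) y)]
  have h1 : ∑ y : KochV g, kdist (g+1) (Sum.inl u) (Sum.inl y) =
      ∑ y : KochV g, kdist g u y :=
    Finset.sum_congr rfl (fun y _ => kdist_inl_inl g u y)
  have h2 : ∑ z : KochT g × Fin 3 × Fin 2, kdist (g+1) (Sum.inl u) (Sum.inr z) =
      ∑ z : KochT g × Fin 3 × Fin 2,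
        (fun p : KochT g × Fin 3 => kdist g u (kochCorner g p.1 p.2) + 1) (z.1, z.2.1) := by
    apply Finset.sum_congr rfl
    rintro ⟨t, i, j⟩ _
    exact kdist_inl_inr g u t i j
  rw [h1, h2, sum_pair_of_triple g (fun p => kdist g u (kochCorner g p.1 p.2) + 1)]
  have h3 : ∑ p : KochT g × Fin 3, (kdist g u (kochCorner g p.1 p.2) + 1) =
      wsum g u + 3 * 4 ^ g := by
    rw [Finset.sum_add_distrib, sum_corner_kdist, card_pair]
  rw [h3]
  ring

lemma wsum_inl (g : ℕ) (u : KochV g) :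
    wsum (g+1) (Sum.inl u) = 4 * wsum g u + 6 * 4 ^ g := by
  unfold wsum
  rw [sum_kochV_succ g
    (fun y => 2 ^ (g + 1 - kochLevel (g+1) y) * kdist (g+1) (Sum.inl u) y)]
  have h1 : ∑ y : KochV g,
      2 ^ (g + 1 - kochLevel (g+1) (Sum.inl y)) * kdist (g+1) (Sum.inl u) (Sum.inl y) =
      ∑ y : KochV g, 2 * (2 ^ (g - kochLevel g y) * kdist g u y) := by
    apply Finset.sum_congr rfl
    intro y _
    rw [level_inl, kdist_inl_inl,
      show g + 1 - kochLevel g y = (g - kochLevel g y) + 1 from by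
        have := kochLevel_le g y; omega, pow_succ]
    ring
  have h2 : ∑ z : KochT g × Fin 3 × Fin 2,
      2 ^ (g + 1 - kochLevel (g+1) (Sum.inr z)) * kdist (g+1) (Sum.inl u) (Sum.inr z) =
      ∑ z : KochT g × Fin 3 × Fin 2,
        (fun p : KochT g × Fin 3 => kdist g u (kochCorner g p.1 p.2) + 1) (z.1, z.2.1) := by
    apply Finset.sum_congr rfl
    rintro ⟨t, i, j⟩ _
    rw [level_inr, Nat.sub_self, pow_zero, one_mul]
    exact kdist_inl_inr g u t i j
  rw [h1, h2, sum_pair_of_triple g (fun p => kdist g u (kochCorner g p.1 p.2) + 1)]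
  have h3 : ∑ p : KochT g × Fin 3, (kdist g u (kochCorner g p.1 p.2) + 1) =
      wsum g u + 3 * 4 ^ g := by
    rw [Finset.sum_add_distrib, sum_corner_kdist, card_pair]
  rw [h3, ← Finset.mul_sum]
  have : ∑ y : KochV g, 2 ^ (g - kochLevel g y) * kdist g u y = wsum g u := rfl
  rw [this]
  ring
lemma kdist_inr_inr_eval (g : ℕ) (t t' : KochT g) (i i' : Fin 3) (j j' : Fin 2) :
    kdist (g+1) (Sum.inr (t, i, j)) (Sum.inr (t', i', j')) =
      if t = t' ∧ i = i' then (if j = j' then 0 else 1)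
      else kdist g (kochCorner g t i) (kochCorner g t' i') + 2 := rfl

lemma key_new (g : ℕ) (t : KochT g) (i : Fin 3) (j : Fin 2) :
    (∑ z : KochT g × Fin 3 × Fin 2, kdist (g+1) (Sum.inr (t, i, j)) (Sum.inr z)) + 3 =
      2 * wsum g (kochCorner g t i) + 12 * 4 ^ g := by
  set c := kochCorner g t i with hc
  set sib : Fin 2 := if j = 0 then 1 else 0 with hsib
  have hpt : ∀ z : KochT g × Fin 3 × Fin 2,
      kdist (g+1) (Sum.inr (t, i, j)) (Sum.inr z)
        + ((if z = (t, i, j) then 2 else 0) + (if z = (t, i, sib) then 1 else 0)) =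
      (fun p : KochT g × Fin 3 => kdist g c (kochCorner g p.1 p.2) + 2) (z.1, z.2.1) := by
    rintro ⟨t', i', j'⟩
    by_cases hp : t = t' ∧ i = i'
    · obtain ⟨rfl, rfl⟩ := hp
      rw [kdist_inr_inr_eval]
      simp only [eq_self_iff_true, and_self, if_true]
      show _ = kdist g c (kochCorner g t i) + 2
      rw [← hc, kdist_self]
      fin_cases j <;> fin_cases j' <;> simp [hsib, Prod.ext_iff]
    · rw [kdist_inr_inr_eval, if_neg hp]
      rw [if_neg (by rintro ⟨rfl, rfl, rfl⟩; exact hp ⟨rfl, rfl⟩),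
        if_neg (by rintro ⟨rfl, rfl, rfl⟩; exact hp ⟨rfl, rfl⟩)]
  have hsum : (∑ z : KochT g × Fin 3 × Fin 2, kdist (g+1) (Sum.inr (t, i, j)) (Sum.inr z))
      + ((∑ z : KochT g × Fin 3 × Fin 2, if z = (t, i, j) then 2 else 0)
        + ∑ z : KochT g × Fin 3 × Fin 2, if z = (t, i, sib) then 1 else 0) =
      ∑ z : KochT g × Fin 3 × Fin 2,
        (fun p : KochT g × Fin 3 => kdist g c (kochCorner g p.1 p.2) + 2) (z.1, z.2.1) := by
    rw [← Finset.sum_add_distrib, ← Finset.sum_add_distrib]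
    exact Finset.sum_congr rfl (fun z _ => hpt z)
  rw [Finset.sum_ite_eq' Finset.univ (t, i, j) (fun _ => (2 : ℕ)),
    Finset.sum_ite_eq' Finset.univ (t, i, sib) (fun _ => (1 : ℕ))] at hsum
  simp only [Finset.mem_univ, if_true] at hsum
  rw [sum_pair_of_triple g (fun p => kdist g c (kochCorner g p.1 p.2) + 2)] at hsum
  have h3 : ∑ p : KochT g × Fin 3, (kdist g c (kochCorner g p.1 p.2) + 2) =
      wsum g c + 6 * 4 ^ g := by
    rw [Finset.sum_add_distrib, sum_corner_kdist]
    have : ∑ _p : KochT g × Fin 3, (2 : ℕ) = 2 * (3 * 4 ^ g) := by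
      rw [Finset.sum_const, Finset.card_univ, Fintype.card_prod, card_kochT,
        Fintype.card_fin, smul_eq_mul]
      ring
    rw [this]; ring
  rw [h3] at hsum
  omega

lemma dsum_inr (g : ℕ) (t : KochT g) (i : Fin 3) (j : Fin 2) :
    dsum (g+1) (Sum.inr (t, i, j)) + 2 =
      dsum g (kochCorner g t i) + 2 * wsum g (kochCorner g t i) + 14 * 4 ^ g := by
  unfold dsum
  rw [sum_kochV_succ g (fun y => kdist (g+1) (Sum.inr (t, i, j)) y)]
  have h1 : ∑ y : KochV g, kdist (g+1) (Sum.inr (t, i, j)) (Sum.inl y) =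
      (∑ y : KochV g, kdist g (kochCorner g t i) y) + (2 * 4 ^ g + 1) := by
    have : ∀ y : KochV g, kdist (g+1) (Sum.inr (t, i, j)) (Sum.inl y) =
        kdist g (kochCorner g t i) y + 1 := fun y => kdist_inr_inl g y t i j
    simp only [this]
    rw [Finset.sum_add_distrib, Finset.sum_const, Finset.card_univ, card_kochV,
      smul_eq_mul, mul_one]
  have h2 := key_new g t i j
  omega

lemma wsum_inr (g : ℕ) (t : KochT g) (i : Fin 3) (j : Fin 2) :
    wsum (g+1) (Sum.inr (t, i, j)) + 3 =
      4 * wsum g (kochCorner g t i) + 18 * 4 ^ g := by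
  unfold wsum
  rw [sum_kochV_succ g
    (fun y => 2 ^ (g + 1 - kochLevel (g+1) y) * kdist (g+1) (Sum.inr (t, i, j)) y)]
  have h1 : ∑ y : KochV g,
      2 ^ (g + 1 - kochLevel (g+1) (Sum.inl y)) * kdist (g+1) (Sum.inr (t, i, j)) (Sum.inl y) =
      (∑ y : KochV g, 2 * (2 ^ (g - kochLevel g y) * kdist g (kochCorner g t i) y))
        + ∑ y : KochV g, 2 * 2 ^ (g - kochLevel g y) := by
    rw [← Finset.sum_add_distrib]
    apply Finset.sum_congr rfl
    intro y _
    rw [level_inl, kdist_inr_inl,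
      show g + 1 - kochLevel g y = (g - kochLevel g y) + 1 from by
        have := kochLevel_le g y; omega, pow_succ]
    ring
  have h2 : ∑ z : KochT g × Fin 3 × Fin 2,
      2 ^ (g + 1 - kochLevel (g+1) (Sum.inr z)) * kdist (g+1) (Sum.inr (t, i, j)) (Sum.inr z) =
      ∑ z : KochT g × Fin 3 × Fin 2, kdist (g+1) (Sum.inr (t, i, j)) (Sum.inr z) := by
    apply Finset.sum_congr rfl
    intro z _
    rw [level_inr, Nat.sub_self, pow_zero, one_mul]
  rw [h1, h2]
  have h3 : ∑ y : KochV g, 2 * (2 ^ (g - kochLevel g y) * kdist g (kochCorner g t i) y) =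
      2 * ∑ y : KochV g, 2 ^ (g - kochLevel g y) * kdist g (kochCorner g t i) y := by
    rw [← Finset.mul_sum]
  have h4 : ∑ y : KochV g, 2 * 2 ^ (g - kochLevel g y) = 2 * (3 * 4 ^ g) := by
    rw [← Finset.mul_sum, weight_total]
  have h5 := key_new g t i j
  have h6 : wsum g (kochCorner g t i) =
      ∑ y : KochV g, 2 ^ (g - kochLevel g y) * kdist g (kochCorner g t i) y := rfl
  rw [h6] at h5
  rw [h3, h4]
  omega

lemma main_rec : ∀ g (x p : KochV g), kochParent g x = some p →
    dsum g x + 2 * 4 ^ (g - kochLevel g x) = dsum g p + 2 * 4 ^ g ∧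
    wsum g x + 3 * 4 ^ (g - kochLevel g x) = wsum g p + 3 * 4 ^ g := by
  intro g
  induction g with
  | zero => intro x p hp; exact absurd hp (by simp [kochParent])
  | succ g IH =>
    intro x p hp
    match x with
    | Sum.inl u =>
      have hp' : (kochParent g u).map Sum.inl = some p := hp
      obtain ⟨q, hq, rfl⟩ := Option.map_eq_some_iff.mp hp'
      obtain ⟨h1, h2⟩ := IH u q hq
      have hle : kochLevel g u ≤ g := kochLevel_le g u
      have hlvl : kochLevel (g+1) (Sum.inl u) = kochLevel g u := rfl
      rw [hlvl, dsum_inl, wsum_inl, dsum_inl, wsum_inl,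
        show g + 1 - kochLevel g u = (g - kochLevel g u) + 1 from by omega,
        pow_succ, pow_succ (4 : ℕ) g]
      constructor <;> omega
    | Sum.inr (t, i, j) =>
      have hp' : some (Sum.inl (kochCorner g t i)) = some p := hp
      obtain rfl := Option.some.inj hp'
      have hlvl : kochLevel (g+1) (Sum.inr (t, i, j)) = g + 1 := rfl
      rw [hlvl, Nat.sub_self, pow_zero, dsum_inl, wsum_inl, pow_succ]
      have hd := dsum_inr g t i j
      have hw := wsum_inr g t i j
      constructor <;> omega
/-- In the Koch network `K_g`, if `p` is the parent of a node `x` (so `x` has label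
`{0, i_1, …, i_n}` with `n ≥ 1`, `i_n = kochLevel g x`, and `p` has label
`{0, i_1, …, i_{n-1}}`), then the sums of shortest-path distances satisfy
`d_x(g) = d_p(g) + 2·4^g - 2·4^{g - i_n}`. -/
theorem stmt_11 (g : ℕ) (x p : KochV g) (hp : kochParent g x = some p) :
    ∑ y : KochV g, (kochGraph g).dist x y =
      (∑ y : KochV g, (kochGraph g).dist p y) + 2 * 4 ^ g -
        2 * 4 ^ (g - kochLevel g x) := by
  have hx : ∑ y : KochV g, (kochGraph g).dist x y = dsum g x :=
    Finset.sum_congr rfl (fun y _ => dist_eq_kdist g x y)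
  have hpd : ∑ y : KochV g, (kochGraph g).dist p y = dsum g p :=
    Finset.sum_congr rfl (fun y _ => dist_eq_kdist g p y)
  rw [hx, hpd]
  have h := (main_rec g x p hp).1
  have hle : 4 ^ (g - kochLevel g x) ≤ 4 ^ g :=
    Nat.pow_le_pow_right (by norm_num) (Nat.sub_le g (kochLevel g x))
  omega
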